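/- arXiv:1107.1585 — 7 statements merged into one kernel-verified Lean document; each statement's English description precedes it below -/
import Mathlib

section
/- Suppose that no two distinct terminals of T are adjacent in G and that no vertex of V ∖ T is adjacent to two distinct terminals of T. Let d : V ∖ T → ℝ be the assignment with d_v = 1/2 for v ∈ N(T) and d_v = 0 otherwise. Let t ∈ T and let C ⊆ V ∖ T be a separating cut of t. Define d'_v = d_v + 1/2 for v ∈ C ∖ N(t), d'_v = d_v − 1/2 for v ∈ N(t) ∖ C, and d'_v = d_v otherwise. Then d'_v ≥ 0 for all v, d' is an LP-feasible assignment for (G,T), and the cost of d' equals the cost of d plus (|C| − |N(t)|)/2; in particular, if |C| ≤ |N(t)| then the cost of d' is at most the cost of d. -/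
open Finset

/-- `N(S)`: the set of vertices outside `S` having a neighbour in `S`. -/
def nbhd {V : Type*} [Fintype V] [DecidableEq V] (G : SimpleGraph V) [DecidableRel G.Adj]
    (S : Finset V) : Finset V :=
  univ.filter (fun v => v ∉ S ∧ ∃ u ∈ S, G.Adj v u)

/-- `d` is an LP-feasible assignment for `(G, T)`. -/
def LPFeasible {V : Type*} [DecidableEq V] (G : SimpleGraph V) (T : Finset V) (d : V → ℝ) :
    Prop :=
  (∀ v, v ∉ T → 0 ≤ d v) ∧
  ∀ ⦃t₁ t₂ : V⦄, t₁ ∈ T → t₂ ∈ T → t₁ ≠ t₂ →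
    ∀ p : G.Walk t₁ t₂, p.IsPath →
      1 ≤ ∑ v ∈ p.support.toFinset.filter (fun v => v ∉ T), d v

/-- The cost of an LP assignment for `(G, T)`. -/
def lpCost {V : Type*} [Fintype V] [DecidableEq V] (T : Finset V) (d : V → ℝ) : ℝ :=
  ∑ v ∈ univ.filter (fun v => v ∉ T), d v

/-- `S` is a separating cut of the terminal `t`: `S` consists of non-terminal vertices
and every path from `t` to another terminal contains a vertex of `S`. -/
def IsSeparatingCut {V : Type*} [DecidableEq V] (G : SimpleGraph V) (T : Finset V) (t : V)
    (S : Finset V) : Prop :=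
  (∀ x ∈ S, x ∉ T) ∧
  ∀ ⦃t' : V⦄, t' ∈ T → t' ≠ t →
    ∀ p : G.Walk t t', p.IsPath → ∃ v ∈ p.support, v ∈ S

lemma mem_nbhd_iff {V : Type*} [Fintype V] [DecidableEq V] (G : SimpleGraph V)
    [DecidableRel G.Adj] (S : Finset V) (v : V) :
    v ∈ nbhd G S ↔ v ∉ S ∧ ∃ u ∈ S, G.Adj v u := by
  simp [nbhd]

lemma exists_snd_vertex {V : Type*} (G : SimpleGraph V) {a b : V} (p : G.Walk a b)
    (hab : a ≠ b) : ∃ v ∈ p.support, G.Adj a v := by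
  cases p with
  | nil => exact absurd rfl hab
  | cons h q =>
    refine ⟨_, ?_, h⟩
    rw [SimpleGraph.Walk.support_cons]
    exact List.mem_cons_of_mem _ q.start_mem_support

lemma one_le_sum_helper {V : Type*} [DecidableEq V] (S : Finset V) (f : V → ℝ)
    (h0 : ∀ v ∈ S, 0 ≤ f v)
    (h : (∃ a ∈ S, 1 ≤ f a) ∨ ∃ a ∈ S, ∃ b ∈ S, a ≠ b ∧ 1/2 ≤ f a ∧ 1/2 ≤ f b) :
    1 ≤ ∑ v ∈ S, f v := by
  rcases h with ⟨a, ha, hfa⟩ | ⟨a, ha, b, hb, hab, hfa, hfb⟩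
  · exact hfa.trans (Finset.single_le_sum h0 ha)
  · calc (1:ℝ) = 1/2 + 1/2 := by norm_num
      _ ≤ f a + f b := by linarith
      _ = ∑ v ∈ ({a, b} : Finset V), f v := (Finset.sum_pair hab).symm
      _ ≤ ∑ v ∈ S, f v :=
        Finset.sum_le_sum_of_subset_of_nonneg
          (by simp [Finset.insert_subset_iff, ha, hb]) (fun i hi _ => h0 i hi)

/-- Rerouting the half-integral LP solution through a separating cut `C` of a
terminal `t`: the modified assignment `d'` is nonnegative, LP-feasible, and its cost is
the cost of `d` plus `(|C| − |N(t)|)/2`; in particular if `|C| ≤ |N(t)|` then the cost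
does not increase. -/
theorem reroute_through_separating_cut {V : Type*} [Fintype V] [DecidableEq V]
    (G : SimpleGraph V) [DecidableRel G.Adj] (T : Finset V)
    (hTT : ∀ t₁ ∈ T, ∀ t₂ ∈ T, t₁ ≠ t₂ → ¬ G.Adj t₁ t₂)
    (hdeg : ∀ v, v ∉ T → ∀ t₁ ∈ T, ∀ t₂ ∈ T, G.Adj v t₁ → G.Adj v t₂ → t₁ = t₂)
    (t : V) (ht : t ∈ T) (C : Finset V) (hC : IsSeparatingCut G T t C)
    (d d' : V → ℝ)
    (hd : d = fun v => if v ∈ nbhd G T then (1 : ℝ) / 2 else 0)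
    (hd' : d' = fun v =>
      if v ∈ C \ nbhd G {t} then d v + 1 / 2
      else if v ∈ nbhd G {t} \ C then d v - 1 / 2
      else d v) :
    (∀ v, v ∉ T → 0 ≤ d' v) ∧ LPFeasible G T d' ∧
    lpCost T d' = lpCost T d + ((C.card : ℝ) - ((nbhd G {t}).card : ℝ)) / 2 ∧
    (C.card ≤ (nbhd G {t}).card → lpCost T d' ≤ lpCost T d) := by
  set Nt := nbhd G {t} with hNt
  set NT := nbhd G T with hNT
  -- basic facts about d
  have hdnn : ∀ v, 0 ≤ d v := by
    intro v; rw [hd]; dsimp only; split <;> norm_num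
  have hdval : ∀ v, v ∈ NT → d v = 1/2 := by
    intro v hv; rw [hd]; show (if v ∈ NT then (1:ℝ)/2 else 0) = 1/2; rw [if_pos hv]
  -- vertices of Nt are non-terminals and lie in NT
  have hNtT : ∀ v ∈ Nt, v ∉ T := by
    intro v hv hvT
    rw [hNt, mem_nbhd_iff] at hv
    obtain ⟨hvt, u, hu, hadj⟩ := hv
    rw [Finset.mem_singleton] at hu hvt
    rw [hu] at hadj
    exact hTT v hvT t ht hvt hadj
  have hNtNT : ∀ v ∈ Nt, v ∈ NT := by
    intro v hv
    have hvT := hNtT v hv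
    rw [hNt, mem_nbhd_iff] at hv
    obtain ⟨hvt, u, hu, hadj⟩ := hv
    rw [Finset.mem_singleton] at hu
    rw [hu] at hadj
    rw [hNT, mem_nbhd_iff]
    exact ⟨hvT, t, ht, hadj⟩
  -- pointwise description of d'
  have hd'nn : ∀ v, 0 ≤ d' v := by
    intro v; rw [hd']; dsimp only
    split_ifs with h1 h2
    · have := hdnn v; linarith
    · rw [Finset.mem_sdiff] at h2
      have := hdval v (hNtNT v h2.1); linarith
    · exact hdnn v
  have key1 : ∀ v, v ∈ NT → v ∉ Nt → 1/2 ≤ d' v := by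
    intro v hv hvn; rw [hd']; dsimp only
    split_ifs with h1 h2
    · have := hdnn v; linarith
    · rw [Finset.mem_sdiff] at h2; exact absurd h2.1 hvn
    · rw [hdval v hv]
  have key2 : ∀ v ∈ C, 1/2 ≤ d' v := by
    intro v hv; rw [hd']; dsimp only
    split_ifs with h1 h2
    · have := hdnn v; linarith
    · rw [Finset.mem_sdiff] at h2; exact absurd hv h2.2
    · rw [Finset.mem_sdiff] at h1
      push_neg at h1
      rw [hdval v (hNtNT v (h1 hv))]
  have key3 : ∀ v ∈ C, v ∈ NT → v ∉ Nt → 1 ≤ d' v := by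
    intro v hv hvN hvn; rw [hd']; dsimp only
    rw [if_pos (Finset.mem_sdiff.mpr ⟨hv, hvn⟩), hdval v hvN]
    norm_num
  -- neighbours of a terminal are non-terminals in NT
  have hnbr : ∀ s ∈ T, ∀ v, G.Adj s v → v ∉ T ∧ v ∈ NT := by
    intro s hs v hadj
    have hvT : v ∉ T := by
      intro hvT
      exact hTT s hs v hvT (G.ne_of_adj hadj) hadj
    refine ⟨hvT, ?_⟩
    rw [hNT, mem_nbhd_iff]
    exact ⟨hvT, s, hs, hadj.symm⟩
  -- not adjacent to t:
  have hnotNt : ∀ s ∈ T, s ≠ t → ∀ v, G.Adj s v → v ∉ Nt := by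
    intro s hs hst v hadj hvNt
    have hvT : v ∉ T := (hnbr s hs v hadj).1
    rw [hNt, mem_nbhd_iff] at hvNt
    obtain ⟨-, u, hu, hadj'⟩ := hvNt
    rw [Finset.mem_singleton] at hu; rw [hu] at hadj'
    exact hst (hdeg v hvT s hs t ht hadj.symm hadj')
  -- feasibility
  have hfeas : ∀ ⦃t₁ t₂ : V⦄, t₁ ∈ T → t₂ ∈ T → t₁ ≠ t₂ →
      ∀ p : G.Walk t₁ t₂, p.IsPath →
        1 ≤ ∑ v ∈ p.support.toFinset.filter (fun v => v ∉ T), d' v := by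
    intro t₁ t₂ ht₁ ht₂ hne p hp
    set S := p.support.toFinset.filter (fun v => v ∉ T) with hS
    have hmemS : ∀ v, v ∈ p.support → v ∉ T → v ∈ S := by
      intro v h1 h2
      rw [hS, Finset.mem_filter, List.mem_toFinset]
      exact ⟨h1, h2⟩
    have h0 : ∀ v ∈ S, 0 ≤ d' v := fun v _ => hd'nn v
    obtain ⟨v, hvs, hav⟩ := exists_snd_vertex G p hne
    obtain ⟨u, hus', hau⟩ := exists_snd_vertex G p.reverse hne.symm
    have hus : u ∈ p.support := by
      rwa [SimpleGraph.Walk.support_reverse, List.mem_reverse] at hus'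
    have hv1 := hnbr t₁ ht₁ v hav
    have hu1 := hnbr t₂ ht₂ u hau
    apply one_le_sum_helper S d' h0
    by_cases h1 : t = t₁
    · subst h1
      obtain ⟨w, hws, hwC⟩ := hC.2 ht₂ hne.symm p hp
      have hwT := hC.1 w hwC
      have huNt : u ∉ Nt := hnotNt t₂ ht₂ hne.symm u hau
      by_cases hwu : w = u
      · subst hwu
        exact Or.inl ⟨w, hmemS w hws hwT, key3 w hwC hu1.2 huNt⟩
      · exact Or.inr ⟨w, hmemS w hws hwT, u, hmemS u hus hu1.1,
          hwu, key2 w hwC, key1 u hu1.2 huNt⟩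
    · by_cases h2 : t = t₂
      · subst h2
        obtain ⟨w, hws', hwC⟩ := hC.2 ht₁ (Ne.symm h1) p.reverse hp.reverse
        have hws : w ∈ p.support := by
          rwa [SimpleGraph.Walk.support_reverse, List.mem_reverse] at hws'
        have hwT := hC.1 w hwC
        have hvNt : v ∉ Nt := hnotNt t₁ ht₁ (Ne.symm h1) v hav
        by_cases hwv : w = v
        · subst hwv
          exact Or.inl ⟨w, hmemS w hws hwT, key3 w hwC hv1.2 hvNt⟩
        · exact Or.inr ⟨w, hmemS w hws hwT, v, hmemS v hvs hv1.1,
            hwv, key2 w hwC, key1 v hv1.2 hvNt⟩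
      · have hvNt : v ∉ Nt := hnotNt t₁ ht₁ (Ne.symm h1) v hav
        have huNt : u ∉ Nt := hnotNt t₂ ht₂ (Ne.symm h2) u hau
        have hvu : v ≠ u := by
          intro h; subst h
          exact hne (hdeg v hv1.1 t₁ ht₁ t₂ ht₂ hav.symm hau.symm)
        exact Or.inr ⟨v, hmemS v hvs hv1.1, u, hmemS u hus hu1.1,
          hvu, key1 v hv1.2 hvNt, key1 u hu1.2 huNt⟩
  -- cost
  have hcost : lpCost T d' = lpCost T d + ((C.card : ℝ) - ((Nt).card : ℝ)) / 2 := by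
    set F := univ.filter (fun v : V => v ∉ T) with hF
    have hsplit : ∀ v, d' v = d v + ((if v ∈ C \ Nt then (1:ℝ)/2 else 0)
        + (if v ∈ Nt \ C then -(1/2 : ℝ) else 0)) := by
      intro v; rw [hd']; dsimp only
      split_ifs with h1 h2 <;>
        first
          | (exact absurd (Finset.mem_sdiff.mp h2).1
              (Finset.mem_sdiff.mp h1).2)
          | ring1
    have hsum : ∀ (A : Finset V) (c : ℝ), A ⊆ F →
        ∑ v ∈ F, (if v ∈ A then c else 0) = (A.card : ℝ) * c := by
      intro A c hA
      rw [Finset.sum_ite_mem, Finset.inter_eq_right.mpr hA, Finset.sum_const,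
        nsmul_eq_mul]
    have hsub1 : C \ Nt ⊆ F := by
      intro v hv
      rw [Finset.mem_sdiff] at hv
      rw [hF, Finset.mem_filter]
      exact ⟨Finset.mem_univ v, hC.1 v hv.1⟩
    have hsub2 : Nt \ C ⊆ F := by
      intro v hv
      rw [Finset.mem_sdiff] at hv
      rw [hF, Finset.mem_filter]
      exact ⟨Finset.mem_univ v, hNtT v hv.1⟩
    have e1 : lpCost T d' = lpCost T d + (((C \ Nt).card : ℝ) * (1/2)
        + ((Nt \ C).card : ℝ) * (-(1/2))) := by
      unfold lpCost
      rw [← hF]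
      calc ∑ v ∈ F, d' v
          = ∑ v ∈ F, (d v + ((if v ∈ C \ Nt then (1:ℝ)/2 else 0)
            + (if v ∈ Nt \ C then -(1/2 : ℝ) else 0))) := by
            exact Finset.sum_congr rfl (fun v _ => hsplit v)
        _ = ∑ v ∈ F, d v + (∑ v ∈ F, (if v ∈ C \ Nt then (1:ℝ)/2 else 0)
            + ∑ v ∈ F, (if v ∈ Nt \ C then -(1/2 : ℝ) else 0)) := by
            rw [Finset.sum_add_distrib, Finset.sum_add_distrib]
        _ = ∑ v ∈ F, d v + (((C \ Nt).card : ℝ) * (1/2)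
            + ((Nt \ C).card : ℝ) * (-(1/2))) := by
            rw [hsum _ _ hsub1, hsum _ _ hsub2]
    have c1 : (C \ Nt).card + (C ∩ Nt).card = C.card :=
      Finset.card_sdiff_add_card_inter C Nt
    have c2 : (Nt \ C).card + (Nt ∩ C).card = Nt.card :=
      Finset.card_sdiff_add_card_inter Nt C
    have c3 : (C ∩ Nt).card = (Nt ∩ C).card := by rw [Finset.inter_comm]
    have c1' : ((C \ Nt).card : ℝ) + ((C ∩ Nt).card : ℝ) = C.card := by
      exact_mod_cast c1
    have c2' : ((Nt \ C).card : ℝ) + ((Nt ∩ C).card : ℝ) = Nt.card := by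
      exact_mod_cast c2
    have c3' : ((C ∩ Nt).card : ℝ) = ((Nt ∩ C).card : ℝ) := by exact_mod_cast c3
    rw [e1]; linarith
  refine ⟨fun v _ => hd'nn v, ⟨fun v _ => hd'nn v, hfeas⟩, hcost, ?_⟩
  intro hle
  rw [hcost]
  have : ((C.card : ℝ) - (Nt.card : ℝ)) / 2 ≤ 0 := by
    have : (C.card : ℝ) ≤ (Nt.card : ℝ) := by exact_mod_cast hle
    linarith
  linarith
end

section
/- Let G = (V,E) be a finite simple undirected graph and let G' be the graph on vertex set V ⊎ V (with copies written inl v and inr v) whose edges are: inl u – inl v for every edge uv ∈ E, and inl v – inr v for every v ∈ V. Let T = { inr v : v ∈ V } be the set of terminals of G'. Then a set X ⊆ V is a vertex cover of G if and only if { inl v : v ∈ X } is a multiway cut for (G',T). -/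
open Finset

/-- The graph `G'` on `V ⊕ V`: `inl u — inl v` for every edge `uv` of `G`, together with
the pendant edges `inl v — inr v` for every `v ∈ V`. -/
def terminalGadget {V : Type*} (G : SimpleGraph V) : SimpleGraph (V ⊕ V) where
  Adj a b :=
    match a, b with
    | .inl u, .inl v => G.Adj u v
    | .inl u, .inr v => u = v
    | .inr u, .inl v => u = v
    | .inr _, .inr _ => False
  symm := ⟨by
    rintro (u | u) (v | v) h
    · exact G.adj_symm h
    · exact h.symm
    · exact h.symm
    · exact h⟩
  loopless := ⟨by
    rintro (u | u) h
    · exact G.ne_of_adj h rfl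
    · exact h⟩

/-- `X` is a multiway cut for `(H, T)` (set version): `X` consists of non-terminal
vertices and every path between two distinct terminals contains a vertex of `X`. -/
def IsMultiwayCut {W : Type*} (H : SimpleGraph W) (T X : Set W) : Prop :=
  (∀ x ∈ X, x ∉ T) ∧
  ∀ ⦃t₁ t₂ : W⦄, t₁ ∈ T → t₂ ∈ T → t₁ ≠ t₂ →
    ∀ p : H.Walk t₁ t₂, p.IsPath → ∃ v ∈ p.support, v ∈ X


lemma walk_aux {V : Type*} {G : SimpleGraph V} {X : Set V}
    (hc : ∀ u v : V, G.Adj u v → u ∈ X ∨ v ∈ X) :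
    ∀ {x y : V ⊕ V} (p : (terminalGadget G).Walk x y) (a b : V),
      (x = Sum.inl a ∨ x = Sum.inr a) → (y = Sum.inl b ∨ y = Sum.inr b) → a ≠ b →
      ∃ v ∈ p.support, v ∈ Sum.inl '' X := by
  intro x y p
  induction p with
  | nil =>
    rintro a b (rfl | rfl) (h | h) hab <;> simp_all
  | @cons x z y h q ih =>
    rintro a b (rfl | rfl) hy hab
    · match z, h with
      | Sum.inl c, h =>
        have hadj : G.Adj a c := h
        rcases hc a c hadj with hx | hx
        · exact ⟨Sum.inl a, by simp, ⟨a, hx, rfl⟩⟩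
        · exact ⟨Sum.inl c, by simp, ⟨c, hx, rfl⟩⟩
      | Sum.inr c, h =>
        have : a = c := h
        subst this
        obtain ⟨v, hv, hvX⟩ := ih a b (Or.inr rfl) hy hab
        exact ⟨v, by simp [hv], hvX⟩
    · match z, h with
      | Sum.inl c, h =>
        have : a = c := h
        subst this
        obtain ⟨v, hv, hvX⟩ := ih a b (Or.inl rfl) hy hab
        exact ⟨v, by simp [hv], hvX⟩

/-- `X ⊆ V` is a vertex cover of `G` if and only if `{inl v : v ∈ X}` is a multiway cut
for `(G', T)` where `T = {inr v : v ∈ V}`. -/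
theorem vertexCover_iff_multiwayCut {V : Type*} (G : SimpleGraph V) (X : Set V) :
    (∀ u v : V, G.Adj u v → u ∈ X ∨ v ∈ X) ↔
    IsMultiwayCut (terminalGadget G) (Set.range Sum.inr) (Sum.inl '' X) := by
  constructor
  · intro hc
    refine ⟨?_, ?_⟩
    · rintro x ⟨v, hv, rfl⟩ ⟨w, hw⟩
      cases hw
    · rintro t₁ t₂ ⟨a, rfl⟩ ⟨b, rfl⟩ hne p hp
      have hab : a ≠ b := fun h => hne (by rw [h])
      exact walk_aux hc p a b (Or.inr rfl) (Or.inr rfl) hab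
  · rintro ⟨-, hcut⟩ u v huv
    have hab : u ≠ v := huv.ne
    have h1 : (terminalGadget G).Adj (Sum.inr u) (Sum.inl u) := rfl
    have h2 : (terminalGadget G).Adj (Sum.inl u) (Sum.inl v) := huv
    have h3 : (terminalGadget G).Adj (Sum.inl v) (Sum.inr v) := rfl
    let p : (terminalGadget G).Walk (Sum.inr u) (Sum.inr v) :=
      .cons h1 (.cons h2 (.cons h3 .nil))
    have hp : p.IsPath := by
      simp [p, SimpleGraph.Walk.isPath_def, hab, hab.symm]
    obtain ⟨w, hw, ⟨c, hcX, rfl⟩⟩ :=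
      hcut ⟨u, rfl⟩ ⟨v, rfl⟩ (by simp [hab]) p hp
    simp only [p, SimpleGraph.Walk.support_cons, SimpleGraph.Walk.support_nil,
      List.mem_cons, List.mem_singleton] at hw
    rcases hw with h | h | h | h
    · exact absurd h (by simp)
    · exact Or.inl (by cases h; exact hcX)
    · exact Or.inr (by cases h; exact hcX)
    · exact absurd h (by simp)
end

section
/- Let Φ be a 2-CNF formula in which every clause consists of exactly two (possibly equal) literal occurrences, and let G_Φ be the occurrence graph of Φ. Suppose there exist a truth assignment φ of the variables of Φ and a set X of clauses of Φ such that φ satisfies every clause of Φ not in X. Then G_Φ has a vertex cover of size at most μ(G_Φ) + |X|. -/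
open Finset

/-- The occurrence graph `G_Φ` of a 2-CNF formula `Φ` in which every clause consists of
exactly two (possibly equal) literal occurrences.

The formula is encoded as follows: `Var` is the set of variables, `n x` is the number of
occurrences of the variable `x`, numbered by `Fin (n x)`; an occurrence is an element of
`Σ x, Fin (n x)`; `sgn o = true` iff occurrence `o` is a positive literal; `C` is the set
of clauses and the bijection `e : C × Bool ≃ Σ x, Fin (n x)` assigns to each clause its
two literal occurrences (so each occurrence belongs to exactly one clause slot).

Vertices are pairs `(⟨x, i⟩, b)`, where `(⟨x, i⟩, true) = v(x, i)` and
`(⟨x, i⟩, false) = v(¬x, i)`. Edges: `v(x,i) — v(¬x,j)` for every variable `x` and all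
`i, j` (a complete bipartite graph between `V(x)` and `V(¬x)`), plus one clause edge
joining the vertices `(o, sgn o)` of the two occurrences `o` of each clause. -/
def occGraph {Var C : Type*} (n : Var → ℕ) (sgn : (Σ x : Var, Fin (n x)) → Bool)
    (e : C × Bool ≃ (Σ x : Var, Fin (n x))) :
    SimpleGraph ((Σ x : Var, Fin (n x)) × Bool) :=
  SimpleGraph.fromRel (fun a b =>
    (a.1.1 = b.1.1 ∧ a.2 ≠ b.2) ∨
    (∃ c : C, a = (e (c, false), sgn (e (c, false))) ∧ b = (e (c, true), sgn (e (c, true)))))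

/-- The truth assignment `φ` satisfies the clause `c`: one of the two literal occurrences
of `c` is made true by `φ`. -/
def clauseSat {Var C : Type*} (n : Var → ℕ) (sgn : (Σ x : Var, Fin (n x)) → Bool)
    (e : C × Bool ≃ (Σ x : Var, Fin (n x))) (φ : Var → Bool) (c : C) : Prop :=
  φ (e (c, false)).1 = sgn (e (c, false)) ∨ φ (e (c, true)).1 = sgn (e (c, true))

/-- `M` is a matching of `G`: a set of edges of `G` that are pairwise vertex-disjoint. -/
def IsMatching {V : Type*} (G : SimpleGraph V) (M : Finset (Sym2 V)) : Prop :=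
  (∀ e ∈ M, e ∈ G.edgeSet) ∧
  ∀ e ∈ M, ∀ f ∈ M, e ≠ f → ∀ v : V, v ∈ e → v ∉ f

/-- `μ(G)`: the maximum cardinality of a matching of `G`. -/
noncomputable def matchingNumber {V : Type*} (G : SimpleGraph V) : ℕ :=
  sSup {n : ℕ | ∃ M : Finset (Sym2 V), IsMatching G M ∧ M.card = n}

/-- `Y` is a vertex cover of `G`: every edge has an endpoint in `Y`. -/
def IsVertexCover {V : Type*} (G : SimpleGraph V) (Y : Finset V) : Prop :=
  ∀ u v : V, G.Adj u v → u ∈ Y ∨ v ∈ Y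

instance {Var C : Type*} (n : Var → ℕ) (sgn : (Σ x : Var, Fin (n x)) → Bool)
    (e : C × Bool ≃ (Σ x : Var, Fin (n x))) (φ : Var → Bool) :
    DecidablePred (clauseSat n sgn e φ) := fun _ => by
  unfold clauseSat; infer_instance

/-- If the truth assignment `φ` satisfies every clause of `Φ` outside a set `X` of
clauses, then the occurrence graph `G_Φ` has a vertex cover of size at most
`μ(G_Φ) + |X|`. -/
theorem occGraph_vertexCover_of_assignment {Var C : Type*} [Fintype Var] [DecidableEq Var]
    [Fintype C] [DecidableEq C] (n : Var → ℕ) (sgn : (Σ x : Var, Fin (n x)) → Bool)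
    (e : C × Bool ≃ (Σ x : Var, Fin (n x))) (φ : Var → Bool) (X : Finset C)
    (hφ : ∀ c : C, c ∉ X → clauseSat n sgn e φ c) :
    ∃ Y : Finset ((Σ x : Var, Fin (n x)) × Bool),
      IsVertexCover (occGraph n sgn e) Y ∧
      Y.card ≤ matchingNumber (occGraph n sgn e) + X.card := by
  classical
  set Y₀ : Finset ((Σ x : Var, Fin (n x)) × Bool) :=
    Finset.univ.image (fun o : Σ x : Var, Fin (n x) => (o, φ o.1)) with hY₀
  set Extra : Finset ((Σ x : Var, Fin (n x)) × Bool) :=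
    X.image (fun c => (e (c, false), sgn (e (c, false)))) with hE
  have hmemY₀ : ∀ p : (Σ x : Var, Fin (n x)) × Bool, p.2 = φ p.1.1 → p ∈ Y₀ := by
    intro p hp
    simp only [hY₀, Finset.mem_image, Finset.mem_univ, true_and]
    exact ⟨p.1, by rw [← hp]⟩
  refine ⟨Y₀ ∪ Extra, ?_, ?_⟩
  · intro u v huv
    rw [occGraph, SimpleGraph.fromRel_adj] at huv
    obtain ⟨hne, h | h⟩ := huv
    · rcases h with ⟨hx, hb⟩ | ⟨c, hu, hv⟩
      · by_cases h2 : u.2 = φ u.1.1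
        · exact Or.inl (Finset.mem_union_left _ (hmemY₀ u h2))
        · refine Or.inr (Finset.mem_union_left _ (hmemY₀ v ?_))
          rw [← hx]
          revert hb h2; cases u.2 <;> cases v.2 <;> cases φ u.1.1 <;> simp
      · by_cases hc : c ∈ X
        · refine Or.inl (Finset.mem_union_right _ ?_)
          rw [hu]
          exact Finset.mem_image_of_mem (fun c => (e (c, false), sgn (e (c, false)))) hc
        · rcases hφ c hc with h1 | h1
          · exact Or.inl (Finset.mem_union_left _ (hmemY₀ u (by rw [hu]; exact h1.symm)))
          · exact Or.inr (Finset.mem_union_left _ (hmemY₀ v (by rw [hv]; exact h1.symm)))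
    · rcases h with ⟨hx, hb⟩ | ⟨c, hv, hu⟩
      · by_cases h2 : u.2 = φ u.1.1
        · exact Or.inl (Finset.mem_union_left _ (hmemY₀ u h2))
        · refine Or.inr (Finset.mem_union_left _ (hmemY₀ v ?_))
          rw [hx]
          revert hb h2; cases u.2 <;> cases v.2 <;> cases φ u.1.1 <;> simp
      · by_cases hc : c ∈ X
        · refine Or.inr (Finset.mem_union_right _ ?_)
          rw [hv]
          exact Finset.mem_image_of_mem (fun c => (e (c, false), sgn (e (c, false)))) hc
        · rcases hφ c hc with h1 | h1
          · exact Or.inr (Finset.mem_union_left _ (hmemY₀ v (by rw [hv]; exact h1.symm)))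
          · exact Or.inl (Finset.mem_union_left _ (hmemY₀ u (by rw [hu]; exact h1.symm)))
  · have hcardY₀ : Y₀.card = Fintype.card (Σ x : Var, Fin (n x)) := by
      rw [hY₀, Finset.card_image_of_injective _
        (fun a b hab => (congrArg Prod.fst hab : a = b)), Finset.card_univ]
    have hcardE : Extra.card ≤ X.card := Finset.card_image_le
    have hμ : Fintype.card (Σ x : Var, Fin (n x)) ≤ matchingNumber (occGraph n sgn e) := by
      set M : Finset (Sym2 ((Σ x : Var, Fin (n x)) × Bool)) :=
        Finset.univ.image (fun o : Σ x : Var, Fin (n x) => s((o, true), (o, false))) with hM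
      have hMcard : M.card = Fintype.card (Σ x : Var, Fin (n x)) := by
        rw [hM, Finset.card_image_of_injective, Finset.card_univ]
        intro a b hab
        simp only [Sym2.eq, Sym2.rel_iff', Prod.mk.injEq, Prod.swap_prod_mk] at hab
        tauto
      have hmemM : ∀ m ∈ M, ∃ o : Σ x : Var, Fin (n x), m = s((o, true), (o, false)) := by
        intro m hm
        simp only [hM, Finset.mem_image, Finset.mem_univ, true_and] at hm
        obtain ⟨o, ho⟩ := hm
        exact ⟨o, ho.symm⟩
      have hmatch : IsMatching (occGraph n sgn e) M := by
        constructor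
        · intro m hm
          obtain ⟨o, rfl⟩ := hmemM m hm
          rw [SimpleGraph.mem_edgeSet, occGraph, SimpleGraph.fromRel_adj]
          exact ⟨by simp, Or.inl (Or.inl ⟨rfl, by simp⟩)⟩
        · intro m hm f hf hne v hvm hvf
          obtain ⟨o, rfl⟩ := hmemM m hm
          obtain ⟨o', rfl⟩ := hmemM f hf
          simp only [Sym2.mem_iff] at hvm hvf
          apply hne
          have : o = o' := by
            rcases hvm with h | h <;> rcases hvf with h' | h' <;>
              exact congrArg (fun p => p.1) (h.symm.trans h')
          rw [this]
      have hbdd : BddAbove {k : ℕ | ∃ M : Finset (Sym2 ((Σ x : Var, Fin (n x)) × Bool)),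
          IsMatching (occGraph n sgn e) M ∧ M.card = k} := by
        refine ⟨Fintype.card (Sym2 ((Σ x : Var, Fin (n x)) × Bool)), fun k hk => ?_⟩
        obtain ⟨M', _, rfl⟩ := hk
        exact Finset.card_le_univ M'
      calc Fintype.card (Σ x : Var, Fin (n x)) = M.card := hMcard.symm
        _ ≤ matchingNumber (occGraph n sgn e) := le_csSup hbdd ⟨M, hmatch, rfl⟩
    calc (Y₀ ∪ Extra).card ≤ Y₀.card + Extra.card := Finset.card_union_le _ _
      _ ≤ matchingNumber (occGraph n sgn e) + X.card := by
          rw [hcardY₀]; exact Nat.add_le_add hμ hcardE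
end

section
/- Let Φ be a 2-CNF formula in which every clause consists of exactly two (possibly equal) literal occurrences, and let G_Φ be the occurrence graph of Φ. Suppose Y is a vertex cover of G_Φ. Then there exists a truth assignment φ of the variables of Φ such that the number of clauses of Φ not satisfied by φ is at most |Y| − μ(G_Φ). -/
open Finset

lemma two_mul_matching_card_le {V : Type*} [Fintype V] [DecidableEq V]
    (G : SimpleGraph V) (M : Finset (Sym2 V)) (hM : IsMatching G M) :
    M.card * 2 ≤ Fintype.card V := by
  classical
  have key : Set.InjOn (fun p : Sym2 V × Bool => if p.2 then p.1.out.1 else p.1.out.2)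
      ↑(M ×ˢ (univ : Finset Bool)) := by
    rintro ⟨s, b⟩ hs ⟨t, b'⟩ ht h
    simp only [Finset.coe_product, Set.mem_prod, Finset.mem_coe] at hs ht
    have hmem : ∀ (u : Sym2 V) (c : Bool), (if c then u.out.1 else u.out.2) ∈ u := by
      intro u c; cases c <;> simp [Sym2.out_fst_mem, Sym2.out_snd_mem]
    have hst : s = t := by
      by_contra hne
      exact hM.2 s hs.1 t ht.1 hne _ (by simpa using hmem s b)
        (by simp only at h; rw [h]; exact hmem t b')
    subst hst
    have hdiag : ¬ s.IsDiag := G.not_isDiag_of_mem_edgeSet (hM.1 s hs.1)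
    have : b = b' := by
      by_contra hbb
      have houteq : s.out.1 = s.out.2 := by
        cases b <;> cases b' <;> simp_all
      exact hdiag (by rw [← s.out_eq]; exact Sym2.isDiag_iff_proj_eq.2 houteq)
    simp [this]
  have := Finset.card_le_card_of_injOn _ (fun p _ => Finset.mem_univ _) key
  simpa [Finset.card_product, mul_comm] using this

/-- If `Y` is a vertex cover of the occurrence graph `G_Φ`, then there is a truth
assignment `φ` such that the number of clauses of `Φ` not satisfied by `φ` is at most
`|Y| − μ(G_Φ)` (stated additively: that number plus `μ(G_Φ)` is at most `|Y|`). -/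
theorem occGraph_assignment_of_vertexCover {Var C : Type*} [Fintype Var] [DecidableEq Var]
    [Fintype C] [DecidableEq C] (n : Var → ℕ) (sgn : (Σ x : Var, Fin (n x)) → Bool)
    (e : C × Bool ≃ (Σ x : Var, Fin (n x)))
    (Y : Finset ((Σ x : Var, Fin (n x)) × Bool))
    (hY : IsVertexCover (occGraph n sgn e) Y) :
    ∃ φ : Var → Bool,
      (univ.filter (fun c : C => ¬ clauseSat n sgn e φ c)).card +
        matchingNumber (occGraph n sgn e) ≤ Y.card := by
  classical
  -- the assignment
  set φ : Var → Bool := fun x =>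
    if ∀ i : Fin (n x), ((⟨x, i⟩ : Σ x : Var, Fin (n x)), true) ∈ Y then true else false
    with hφdef
  refine ⟨φ, ?_⟩
  -- every occurrence's "chosen" vertex is in the cover
  have hA : ∀ o : Σ x : Var, Fin (n x), (o, φ o.1) ∈ Y := by
    rintro ⟨x, i⟩
    by_cases h : ∀ j : Fin (n x), ((⟨x, j⟩ : Σ x : Var, Fin (n x)), true) ∈ Y
    · have : φ x = true := by simp [hφdef, h]
      simpa [this] using h i
    · push_neg at h
      obtain ⟨j, hj⟩ := h
      have hfx : φ x = false := by
        rw [hφdef]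
        exact if_neg (fun h' => hj (h' j))
      have hadj : (occGraph n sgn e).Adj ((⟨x, j⟩ : Σ x : Var, Fin (n x)), true)
          ((⟨x, i⟩ : Σ x : Var, Fin (n x)), false) := by
        rw [occGraph, SimpleGraph.fromRel_adj]
        exact ⟨by simp, Or.inl (Or.inl ⟨rfl, by simp⟩)⟩
      rcases hY _ _ hadj with h1 | h2
      · exact absurd h1 hj
      · simpa [hfx] using h2
  -- each unsatisfied clause contributes an extra cover vertex
  have hB : ∀ c : C, ¬ clauseSat n sgn e φ c →
      ∃ b : Bool, (e (c, b), sgn (e (c, b))) ∈ Y ∧ sgn (e (c, b)) ≠ φ (e (c, b)).1 := by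
    intro c hc
    rw [clauseSat, not_or] at hc
    have hne : ((e (c, false), sgn (e (c, false))) : (Σ x : Var, Fin (n x)) × Bool)
        ≠ (e (c, true), sgn (e (c, true))) := by
      intro h
      have := congrArg Prod.fst h
      simp only at this
      exact Bool.false_ne_true (congrArg Prod.snd (e.injective this))
    have hadj : (occGraph n sgn e).Adj (e (c, false), sgn (e (c, false)))
        (e (c, true), sgn (e (c, true))) := by
      rw [occGraph, SimpleGraph.fromRel_adj]
      exact ⟨hne, Or.inl (Or.inr ⟨c, rfl, rfl⟩)⟩
    rcases hY _ _ hadj with h1 | h2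
    · exact ⟨false, h1, fun h => hc.1 h.symm⟩
    · exact ⟨true, h2, fun h => hc.2 h.symm⟩
  set U : Finset C := univ.filter (fun c : C => ¬ clauseSat n sgn e φ c) with hU
  -- choose the extra vertex per unsatisfied clause
  choose b hb1 hb2 using hB
  have hUmem : ∀ c : {x // x ∈ U}, ¬ clauseSat n sgn e φ c.1 :=
    fun c => (Finset.mem_filter.mp c.2).2
  set T1 : Finset ((Σ x : Var, Fin (n x)) × Bool) :=
    univ.image (fun o : Σ x : Var, Fin (n x) => (o, φ o.1)) with hT1
  set T2 : Finset ((Σ x : Var, Fin (n x)) × Bool) := U.attach.image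
    (fun c => (e (c.1, b c.1 (hUmem c)), sgn (e (c.1, b c.1 (hUmem c))))) with hT2
  have hT1card : T1.card = Fintype.card (Σ x : Var, Fin (n x)) := by
    rw [hT1, Finset.card_image_of_injective _ (fun o o' h => congrArg Prod.fst h),
      Finset.card_univ]
  have hT2card : T2.card = U.card := by
    rw [hT2, Finset.card_image_of_injective, Finset.card_attach]
    intro c c' h
    have h1 := congrArg Prod.fst h
    simp only at h1
    exact Subtype.ext (congrArg Prod.fst (e.injective h1))
  have hdisj : Disjoint T1 T2 := by
    rw [Finset.disjoint_left]
    intro a ha1 ha2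
    rw [hT1, Finset.mem_image] at ha1
    rw [hT2, Finset.mem_image] at ha2
    obtain ⟨o, _, rfl⟩ := ha1
    obtain ⟨c, _, hc2⟩ := ha2
    have h1 := congrArg Prod.fst hc2
    have h2 := congrArg Prod.snd hc2
    simp only at h1 h2
    exact hb2 c.1 _ (by rw [h1]; rw [h1] at h2; exact h2)
  have hsub : T1 ∪ T2 ⊆ Y := by
    intro a ha
    rcases Finset.mem_union.mp ha with h | h
    · rw [hT1, Finset.mem_image] at h
      obtain ⟨o, _, rfl⟩ := h
      exact hA o
    · rw [hT2, Finset.mem_image] at h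
      obtain ⟨c, _, rfl⟩ := h
      exact hb1 c.1 _
  have hcount : U.card + Fintype.card (Σ x : Var, Fin (n x)) ≤ Y.card := by
    have := Finset.card_le_card hsub
    rw [Finset.card_union_of_disjoint hdisj, hT1card, hT2card] at this
    omega
  have hμ : matchingNumber (occGraph n sgn e) ≤ Fintype.card (Σ x : Var, Fin (n x)) := by
    have hne0 : {m : ℕ | ∃ M, IsMatching (occGraph n sgn e) M ∧ M.card = m}.Nonempty :=
      ⟨0, ∅, by simp [IsMatching], by simp⟩
    rw [matchingNumber]
    apply csSup_le hne0
    rintro m ⟨M, hM, rfl⟩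
    have := two_mul_matching_card_le _ M hM
    rw [Fintype.card_prod, Fintype.card_bool] at this
    omega
  omega
end

section
/- In the multicut instance I' = (G', 𝒯) constructed from a multicoloured graph (G, V₁, …, V_r) with |V_i| ≥ 2 for all i and |V| = n, the assignment d with d_v = d_{v'} = 1/2 for every v ∈ V and d_u = 0 for every other non-terminal vertex u is LP-feasible for the multicut LP-relaxation, and its cost equals n. -/
open Finset

/-- The vertices of the multicut gadget graph `G'` built from a multicoloured graph on
vertex set `V` with `r` colour classes: the original vertices `orig v`, the primed
copies `prime v`, and the degree-one terminals `tv v`, `sv v` (attached to `v`),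
`sv' v` (attached to `v'`), and `av i`, `bv i` (attached to the endpoints of the path
`P i`). -/
inductive GVert (V : Type*) (r : ℕ) where
  | orig (v : V)
  | prime (v : V)
  | tv (v : V)
  | sv (v : V)
  | sv' (v : V)
  | av (i : Fin r)
  | bv (i : Fin r)
  deriving DecidableEq, Fintype

/-- The (asymmetric) base relation of the edges of the multicut gadget graph `G'`.
Here `P : V → Fin r` is the partition into classes `V i = P ⁻¹ {i}`, and for each `i`
the equivalence `ord i : Fin (m i) ≃ {v // P v = i}` fixes an arbitrary order of `V i`,
along which the primed copies of `V i` are connected into the path `P i`. -/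
def gadgetRel {V : Type*} (G : SimpleGraph V) {r : ℕ} (P : V → Fin r) (m : Fin r → ℕ)
    (ord : ∀ i, Fin (m i) ≃ {v : V // P v = i}) :
    GVert V r → GVert V r → Prop
  | .orig u, .orig v => G.Adj u v
  | .orig u, .prime v => u = v
  | .prime u, .prime v => ∃ (i : Fin r) (j : Fin (m i)) (hj : (j : ℕ) + 1 < m i),
      (ord i j : {v : V // P v = i}).1 = u ∧
      (ord i ⟨(j : ℕ) + 1, hj⟩ : {v : V // P v = i}).1 = v
  | .tv u, .orig v => u = v
  | .sv u, .orig v => u = v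
  | .sv' u, .prime v => u = v
  | .av i, .prime v => ∃ h : 0 < m i, (ord i ⟨0, h⟩ : {v : V // P v = i}).1 = v
  | .bv i, .prime v =>
      ∃ h : 0 < m i,
        (ord i ⟨m i - 1, Nat.sub_lt h Nat.one_pos⟩ : {v : V // P v = i}).1 = v
  | _, _ => False

/-- The multicut gadget graph `G'` (the symmetrisation of `gadgetRel`). -/
def gadgetGraph {V : Type*} (G : SimpleGraph V) {r : ℕ} (P : V → Fin r) (m : Fin r → ℕ)
    (ord : ∀ i, Fin (m i) ≃ {v : V // P v = i}) : SimpleGraph (GVert V r) :=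
  SimpleGraph.fromRel (gadgetRel G P m ord)

/-- The set `𝒯` of demand pairs of the multicut instance: all pairs `(t_u, t_v)` for
`u ≠ v`, the pairs `(s_v, s'_v)`, and the pairs `(a_i, b_i)`. -/
def demandPairs (V : Type*) (r : ℕ) : Set (GVert V r × GVert V r) :=
  {p | (∃ u v : V, u ≠ v ∧ p = (.tv u, .tv v)) ∨
       (∃ v : V, p = (.sv v, .sv' v)) ∨
       (∃ i : Fin r, p = (.av i, .bv i))}

/-- The non-terminal vertices of `G'` are the original and the primed vertices. -/
def nonTerminal {V : Type*} {r : ℕ} : GVert V r → Bool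
  | .orig _ => true
  | .prime _ => true
  | _ => false

/-- `Y` is a multicut for `(G', 𝒯)`: `Y` consists of non-terminal vertices and every
path in `G'` between the two vertices of a demand pair contains a vertex of `Y`
(equivalently, removing `Y` disconnects every demand pair). -/
def IsMulticut {V : Type*} {r : ℕ} (H : SimpleGraph (GVert V r))
    (D : Set (GVert V r × GVert V r)) (Y : Finset (GVert V r)) : Prop :=
  (∀ y ∈ Y, nonTerminal y = true) ∧
  ∀ ⦃s t : GVert V r⦄, (s, t) ∈ D →
    ∀ p : H.Walk s t, p.IsPath → ∃ v ∈ p.support, v ∈ Y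

/-- `d` is an LP-feasible assignment for the multicut LP-relaxation of `(G', 𝒯)`:
`d` is nonnegative on non-terminal vertices and for every demand pair and every path
between its two vertices, the sum of `d` over the non-terminal vertices of the path is
at least `1`. -/
def LPFeasibleMulticut {V : Type*} [DecidableEq V] {r : ℕ} (H : SimpleGraph (GVert V r))
    (D : Set (GVert V r × GVert V r)) (d : GVert V r → ℝ) : Prop :=
  (∀ v, nonTerminal v = true → 0 ≤ d v) ∧
  ∀ ⦃s t : GVert V r⦄, (s, t) ∈ D → ∀ p : H.Walk s t, p.IsPath →
    1 ≤ ∑ v ∈ p.support.toFinset.filter (fun v => nonTerminal v = true), d v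

/-- The cost of a multicut LP assignment: the sum of `d` over all non-terminal
vertices. -/
def multicutLPCost {V : Type*} [Fintype V] [DecidableEq V] {r : ℕ}
    (d : GVert V r → ℝ) : ℝ :=
  ∑ v ∈ univ.filter (fun v : GVert V r => nonTerminal v = true), d v

section Aux

variable {V : Type*} {G : SimpleGraph V} {r : ℕ} {P : V → Fin r} {m : Fin r → ℕ}
    {ord : ∀ i, Fin (m i) ≃ {v : V // P v = i}}

lemma walk_second_mem {α : Type*} {H : SimpleGraph α} {s t : α} (p : H.Walk s t)
    (hst : s ≠ t) : ∃ w, H.Adj s w ∧ w ∈ p.support := by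
  cases p with
  | nil => exact absurd rfl hst
  | cons h q => exact ⟨_, h, by simp⟩

lemma adj_tv {u : V} {w : GVert V r}
    (h : (gadgetGraph G P m ord).Adj (.tv u) w) : w = .orig u := by
  rw [gadgetGraph, SimpleGraph.fromRel_adj] at h
  obtain ⟨-, h | h⟩ := h <;> cases w <;> simp_all [gadgetRel]

lemma adj_sv {u : V} {w : GVert V r}
    (h : (gadgetGraph G P m ord).Adj (.sv u) w) : w = .orig u := by
  rw [gadgetGraph, SimpleGraph.fromRel_adj] at h
  obtain ⟨-, h | h⟩ := h <;> cases w <;> simp_all [gadgetRel]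

lemma adj_sv' {u : V} {w : GVert V r}
    (h : (gadgetGraph G P m ord).Adj (.sv' u) w) : w = .prime u := by
  rw [gadgetGraph, SimpleGraph.fromRel_adj] at h
  obtain ⟨-, h | h⟩ := h <;> cases w <;> simp_all [gadgetRel]

lemma adj_av {i : Fin r} {w : GVert V r} (hi : 0 < m i)
    (h : (gadgetGraph G P m ord).Adj (.av i) w) :
    w = .prime ((ord i ⟨0, hi⟩ : {v : V // P v = i}).1) := by
  rw [gadgetGraph, SimpleGraph.fromRel_adj] at h
  obtain ⟨-, h | h⟩ := h <;> cases w <;> simp_all [gadgetRel]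

lemma adj_bv {i : Fin r} {w : GVert V r} (hi : 0 < m i)
    (h : (gadgetGraph G P m ord).Adj (.bv i) w) :
    w = .prime ((ord i ⟨m i - 1, Nat.sub_lt hi Nat.one_pos⟩ : {v : V // P v = i}).1) := by
  rw [gadgetGraph, SimpleGraph.fromRel_adj] at h
  obtain ⟨-, h | h⟩ := h <;> cases w <;> simp_all [gadgetRel]

lemma sum_ge_one {V : Type*} [DecidableEq V] {r : ℕ} {x y : GVert V r}
    {S : Finset (GVert V r)} (hx : x ∈ S) (hy : y ∈ S) (hxy : x ≠ y)
    (hS : ∀ v ∈ S, nonTerminal v = true) :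
    1 ≤ ∑ v ∈ S, (if nonTerminal v = true then (1 : ℝ) / 2 else 0) := by
  have hsub : ({x, y} : Finset (GVert V r)) ⊆ S := by
    intro z hz
    simp only [Finset.mem_insert, Finset.mem_singleton] at hz
    rcases hz with rfl | rfl <;> assumption
  have hmono : ∑ v ∈ ({x, y} : Finset (GVert V r)),
      (if nonTerminal v = true then (1 : ℝ) / 2 else 0)
      ≤ ∑ v ∈ S, (if nonTerminal v = true then (1 : ℝ) / 2 else 0) :=
    Finset.sum_le_sum_of_subset_of_nonneg hsub
      (fun v _ _ => by split <;> norm_num)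
  have hpair : ∑ v ∈ ({x, y} : Finset (GVert V r)),
      (if nonTerminal v = true then (1 : ℝ) / 2 else 0) = 1 := by
    rw [Finset.sum_pair hxy, if_pos (hS x hx), if_pos (hS y hy)]
    norm_num
  linarith

/-- The non-terminal vertices are in bijection with `V ⊕ V`. -/
def ntEquiv (V : Type*) (r : ℕ) : V ⊕ V ≃ {x : GVert V r // nonTerminal x = true} where
  toFun x := match x with
    | .inl v => ⟨.orig v, rfl⟩
    | .inr v => ⟨.prime v, rfl⟩
  invFun x := match x with
    | ⟨.orig v, _⟩ => .inl v
    | ⟨.prime v, _⟩ => .inr v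
    | ⟨.tv _, h⟩ => absurd h (by simp [nonTerminal])
    | ⟨.sv _, h⟩ => absurd h (by simp [nonTerminal])
    | ⟨.sv' _, h⟩ => absurd h (by simp [nonTerminal])
    | ⟨.av _, h⟩ => absurd h (by simp [nonTerminal])
    | ⟨.bv _, h⟩ => absurd h (by simp [nonTerminal])
  left_inv x := by cases x <;> rfl
  right_inv x := by
    obtain ⟨v, hv⟩ := x
    cases v <;> first | rfl | simp [nonTerminal] at hv

end Aux

/-- In the multicut instance `(G', 𝒯)` built from a multicoloured graph
`(G, V₁, …, V_r)` with `|V_i| ≥ 2`, the assignment giving `1/2` to every vertex `v` and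
every primed vertex `v'` (i.e. to every non-terminal vertex) and `0` elsewhere is
LP-feasible for the multicut LP-relaxation and has cost `n = |V|`. -/
theorem multicut_half_assignment_feasible {V : Type*} [Fintype V] [DecidableEq V]
    (G : SimpleGraph V) {r : ℕ} (P : V → Fin r) (m : Fin r → ℕ)
    (ord : ∀ i, Fin (m i) ≃ {v : V // P v = i})
    (hclique : ∀ u v : V, u ≠ v → P u = P v → G.Adj u v)
    (hm : ∀ i, 2 ≤ m i) :
    LPFeasibleMulticut (gadgetGraph G P m ord) (demandPairs V r)
      (fun v => if nonTerminal v = true then (1 : ℝ) / 2 else 0) ∧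
    multicutLPCost (fun v : GVert V r => if nonTerminal v = true then (1 : ℝ) / 2 else 0)
      = Fintype.card V := by
  constructor
  · constructor
    · intro v hv
      simp [hv]
    · intro s t hD p hp
      have hmemS : ∀ x : GVert V r, x ∈ p.support → nonTerminal x = true →
          x ∈ p.support.toFinset.filter (fun v => nonTerminal v = true) := by
        intro x hx hnx
        simp [List.mem_toFinset, hx, hnx]
      rcases hD with ⟨u, v, huv, heq⟩ | ⟨v, heq⟩ | ⟨i, heq⟩
      · simp only [Prod.mk.injEq] at heq
        obtain ⟨rfl, rfl⟩ := heq
        have hst : (GVert.tv u : GVert V r) ≠ .tv v := by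
          simpa using huv
        obtain ⟨w1, ha1, hm1⟩ := walk_second_mem p hst
        obtain ⟨w2, ha2, hm2⟩ := walk_second_mem p.reverse hst.symm
        rw [adj_tv ha1] at hm1
        rw [adj_tv ha2] at hm2
        rw [SimpleGraph.Walk.support_reverse, List.mem_reverse] at hm2
        exact sum_ge_one (hmemS _ hm1 rfl) (hmemS _ hm2 rfl)
          (by simpa using huv) (fun x hx => (Finset.mem_filter.mp hx).2)
      · simp only [Prod.mk.injEq] at heq
        obtain ⟨rfl, rfl⟩ := heq
        have hst : (GVert.sv v : GVert V r) ≠ .sv' v := by simp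
        obtain ⟨w1, ha1, hm1⟩ := walk_second_mem p hst
        obtain ⟨w2, ha2, hm2⟩ := walk_second_mem p.reverse hst.symm
        rw [adj_sv ha1] at hm1
        rw [adj_sv' ha2] at hm2
        rw [SimpleGraph.Walk.support_reverse, List.mem_reverse] at hm2
        exact sum_ge_one (hmemS _ hm1 rfl) (hmemS _ hm2 rfl)
          (by simp) (fun x hx => (Finset.mem_filter.mp hx).2)
      · simp only [Prod.mk.injEq] at heq
        obtain ⟨rfl, rfl⟩ := heq
        have hi : 0 < m i := lt_of_lt_of_le Nat.zero_lt_two (hm i)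
        have hst : (GVert.av i : GVert V r) ≠ .bv i := by simp
        obtain ⟨w1, ha1, hm1⟩ := walk_second_mem p hst
        obtain ⟨w2, ha2, hm2⟩ := walk_second_mem p.reverse hst.symm
        rw [adj_av hi ha1] at hm1
        rw [adj_bv hi ha2] at hm2
        rw [SimpleGraph.Walk.support_reverse, List.mem_reverse] at hm2
        have hne : (GVert.prime ((ord i ⟨0, hi⟩ : {v : V // P v = i}).1) : GVert V r) ≠
            .prime ((ord i ⟨m i - 1, Nat.sub_lt hi Nat.one_pos⟩ : {v : V // P v = i}).1) := by
          intro hcon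
          have h1 : ((ord i ⟨0, hi⟩ : {v : V // P v = i}).1) =
              ((ord i ⟨m i - 1, Nat.sub_lt hi Nat.one_pos⟩ : {v : V // P v = i}).1) := by
            injection hcon
          have h2 : (ord i ⟨0, hi⟩ : {v : V // P v = i}) =
              ord i ⟨m i - 1, Nat.sub_lt hi Nat.one_pos⟩ := Subtype.ext h1
          have h3 : (⟨0, hi⟩ : Fin (m i)) = ⟨m i - 1, Nat.sub_lt hi Nat.one_pos⟩ :=
            (ord i).injective h2
          have h4 : (0 : ℕ) = m i - 1 := congrArg Fin.val h3
          have h5 := hm i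
          omega
        exact sum_ge_one (hmemS _ hm1 rfl) (hmemS _ hm2 rfl)
          hne (fun x hx => (Finset.mem_filter.mp hx).2)
  · have hcard : (univ.filter (fun v : GVert V r => nonTerminal v = true)).card
        = 2 * Fintype.card V := by
      rw [← Fintype.card_subtype, ← Fintype.card_congr (ntEquiv V r)]
      simp [Fintype.card_sum, two_mul]
    rw [multicutLPCost]
    rw [Finset.sum_congr rfl (fun v hv => if_pos (Finset.mem_filter.mp hv).2)]
    rw [Finset.sum_const, hcard]
    push_cast
    ring
end

section
/- Let I' = (G', 𝒯) be the multicut instance constructed from a multicoloured graph (G, V₁, …, V_r) with |V_i| ≥ 2 for all i and |V| = n. Suppose X ⊆ V is an independent set of G with |X ∩ V_i| = 1 for every 1 ≤ i ≤ r (equivalently, an independent set of size r). Then Y = (V ∖ X) ∪ { v' : v ∈ X } is a multicut of I', that is, Y consists of non-terminal vertices and removing Y from G' disconnects every pair in 𝒯; moreover |Y| = n. -/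
open Finset

/-- Auxiliary "component colouring" map used in the proof of
`multicut_of_independentSet`.  Here `idx v` is the position of `v` in the order of
its colour class and `k i` is the position of the unique vertex of `X ∩ V i`. -/
def cutMap {V : Type*} [DecidableEq V] {r : ℕ} (X : Finset V) (P : V → Fin r)
    (idx : V → ℕ) (k : Fin r → ℕ) : GVert V r → GVert V r
  | .orig v => .orig v
  | .prime v => if v ∈ X then .prime v else
      if idx v < k (P v) then .av (P v) else .bv (P v)
  | .tv v => if v ∈ X then .orig v else .tv v
  | .sv v => if v ∈ X then .orig v else .sv v
  | .sv' v => if v ∈ X then .sv' v else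
      if idx v < k (P v) then .av (P v) else .bv (P v)
  | .av i => .av i
  | .bv i => .bv i

/-- If `X` is an independent set of `G` meeting every colour class `V_i` in exactly one
vertex (equivalently, an independent set of size `r`), then
`Y = {orig v : v ∉ X} ∪ {prime v : v ∈ X}` is a multicut of the instance `(G', 𝒯)`,
and `|Y| = n = |V|`. -/
theorem multicut_of_independentSet {V : Type*} [Fintype V] [DecidableEq V]
    (G : SimpleGraph V) {r : ℕ} (P : V → Fin r) (m : Fin r → ℕ)
    (ord : ∀ i, Fin (m i) ≃ {v : V // P v = i})
    (hclique : ∀ u v : V, u ≠ v → P u = P v → G.Adj u v)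
    (hm : ∀ i, 2 ≤ m i)
    (X : Finset V)
    (hind : ∀ u ∈ X, ∀ v ∈ X, u ≠ v → ¬ G.Adj u v)
    (hone : ∀ i : Fin r, (X.filter (fun v => P v = i)).card = 1)
    (Y : Finset (GVert V r))
    (hY : Y = (univ \ X).image GVert.orig ∪ X.image GVert.prime) :
    IsMulticut (gadgetGraph G P m ord) (demandPairs V r) Y ∧
    Y.card = Fintype.card V := by
  classical
  -- the unique element of `X` in each colour class
  choose x hx using fun i => Finset.card_eq_one.mp (hone i)
  have hxX : ∀ i, x i ∈ X := by
    intro i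
    have : x i ∈ X.filter (fun v => P v = i) := by
      rw [hx i]; exact Finset.mem_singleton_self _
    exact (Finset.mem_filter.mp this).1
  have hxP : ∀ i, P (x i) = i := by
    intro i
    have : x i ∈ X.filter (fun v => P v = i) := by
      rw [hx i]; exact Finset.mem_singleton_self _
    exact (Finset.mem_filter.mp this).2
  have hxuniq : ∀ i, ∀ v ∈ X, P v = i → v = x i := by
    intro i v hv hPv
    have : v ∈ X.filter (fun v => P v = i) := Finset.mem_filter.mpr ⟨hv, hPv⟩
    rw [hx i] at this
    exact Finset.mem_singleton.mp this
  set idx : V → ℕ := fun v => ((ord (P v)).symm ⟨v, rfl⟩ : Fin (m (P v))).val with hidxdef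
  -- basic facts about `idx`
  have hidx : ∀ (i : Fin r) (j : Fin (m i)) (v : V), ((ord i j : {w : V // P w = i}) : V) = v →
      P v = i ∧ idx v = (j : ℕ) := by
    intro i j v h
    have hPv : P v = i := h ▸ (ord i j).2
    subst hPv
    refine ⟨rfl, ?_⟩
    have : (ord (P v)).symm ⟨v, rfl⟩ = j := by
      rw [Equiv.symm_apply_eq]
      exact Subtype.ext h.symm
    simpa [hidxdef] using congrArg Fin.val this
  have hidx_inj : ∀ (i : Fin r) (u v : V), P u = i → P v = i → idx u = idx v → u = v := by
    intro i u v hu hv huv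
    have h1 := hidx i ((ord i).symm ⟨u, hu⟩) u (by simp)
    have h2 := hidx i ((ord i).symm ⟨v, hv⟩) v (by simp)
    have : ((ord i).symm ⟨u, hu⟩ : Fin (m i)) = (ord i).symm ⟨v, hv⟩ := by
      apply Fin.ext
      rw [← h1.2, ← h2.2, huv]
    have := congrArg (fun j => ((ord i j : {w : V // P w = i}) : V)) this
    simpa using this
  set k : Fin r → ℕ := fun i => idx (x i) with hkdef
  have hk_lt : ∀ i, k i < m i := by
    intro i
    have h1 := hidx i ((ord i).symm ⟨x i, hxP i⟩) (x i) (by simp)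
    rw [hkdef]
    simp only
    rw [h1.2]
    exact ((ord i).symm ⟨x i, hxP i⟩).isLt
  have hk_ne : ∀ (i : Fin r) (v : V), P v = i → v ∉ X → idx v ≠ k i := by
    intro i v hPv hvX hcontra
    exact hvX ((hidx_inj i v (x i) hPv (hxP i) hcontra) ▸ hxX i)
  -- membership in `Y`
  have hYorig : ∀ v : V, GVert.orig v ∈ Y ↔ v ∉ X := by
    intro v; subst hY; simp
  have hYprime : ∀ v : V, GVert.prime v ∈ Y ↔ v ∈ X := by
    intro v; subst hY; simp
  set f : GVert V r → GVert V r := cutMap X P idx k with hfdef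
  -- the key edge lemma: `f` is constant on edges of `G' − Y`
  have key : ∀ a b : GVert V r, gadgetRel G P m ord a b → a ∉ Y → b ∉ Y → f a = f b := by
    intro a b hab ha hb
    cases a with
    | orig u =>
      cases b with
      | orig v =>
        have hadj : G.Adj u v := hab
        have hu : u ∈ X := by by_contra h; exact ha ((hYorig u).mpr h)
        have hv : v ∈ X := by by_contra h; exact hb ((hYorig v).mpr h)
        exact absurd hadj (hind u hu v hv hadj.ne)
      | prime v =>
        have huv : u = v := hab
        have hu : u ∈ X := by by_contra h; exact ha ((hYorig u).mpr h)
        have hv : v ∉ X := fun h => hb ((hYprime v).mpr h)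
        exact absurd (huv ▸ hu) hv
      | tv v => exact hab.elim
      | sv v => exact hab.elim
      | sv' v => exact hab.elim
      | av i => exact hab.elim
      | bv i => exact hab.elim
    | prime u =>
      cases b with
      | prime v =>
        obtain ⟨i, j, hj, h1, h2⟩ := hab
        have hu : u ∉ X := fun h => ha ((hYprime u).mpr h)
        have hv : v ∉ X := fun h => hb ((hYprime v).mpr h)
        obtain ⟨hPu, hiu⟩ := hidx i j u h1
        obtain ⟨hPv, hiv⟩ := hidx i ⟨(j : ℕ) + 1, hj⟩ v h2
        have hiv' : idx v = (j : ℕ) + 1 := hiv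
        have hju : idx u ≠ k i := hk_ne i u hPu hu
        have hjv : idx v ≠ k i := hk_ne i v hPv hv
        have : idx u < k i ↔ idx v < k i := by omega
        simp only [hfdef, cutMap, if_neg hu, if_neg hv, hPu, hPv]
        by_cases hlt : idx u < k i
        · rw [if_pos hlt, if_pos (this.mp hlt)]
        · rw [if_neg hlt, if_neg (fun h => hlt (this.mpr h))]
      | orig v => exact hab.elim
      | tv v => exact hab.elim
      | sv v => exact hab.elim
      | sv' v => exact hab.elim
      | av i => exact hab.elim
      | bv i => exact hab.elim
    | tv u =>
      cases b with
      | orig v =>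
        have huv : u = v := hab
        have hv : v ∈ X := by by_contra h; exact hb ((hYorig v).mpr h)
        subst huv
        simp [hfdef, cutMap, hv]
      | prime v => exact hab.elim
      | tv v => exact hab.elim
      | sv v => exact hab.elim
      | sv' v => exact hab.elim
      | av i => exact hab.elim
      | bv i => exact hab.elim
    | sv u =>
      cases b with
      | orig v =>
        have huv : u = v := hab
        have hv : v ∈ X := by by_contra h; exact hb ((hYorig v).mpr h)
        subst huv
        simp [hfdef, cutMap, hv]
      | prime v => exact hab.elim
      | tv v => exact hab.elim
      | sv v => exact hab.elim
      | sv' v => exact hab.elim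
      | av i => exact hab.elim
      | bv i => exact hab.elim
    | sv' u =>
      cases b with
      | prime v =>
        have huv : u = v := hab
        have hv : v ∉ X := fun h => hb ((hYprime v).mpr h)
        subst huv
        simp [hfdef, cutMap, hv]
      | orig v => exact hab.elim
      | tv v => exact hab.elim
      | sv v => exact hab.elim
      | sv' v => exact hab.elim
      | av i => exact hab.elim
      | bv i => exact hab.elim
    | av i =>
      cases b with
      | prime v =>
        obtain ⟨h0, hv0⟩ := hab
        have hv : v ∉ X := fun h => hb ((hYprime v).mpr h)
        obtain ⟨hPv, hiv⟩ := hidx i ⟨0, h0⟩ v hv0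
        have hiv' : idx v = 0 := hiv
        have hne : idx v ≠ k i := hk_ne i v hPv hv
        have hlt : idx v < k i := by omega
        simp only [hfdef, cutMap, if_neg hv, hPv, if_pos hlt]
      | orig v => exact hab.elim
      | tv v => exact hab.elim
      | sv v => exact hab.elim
      | sv' v => exact hab.elim
      | av j => exact hab.elim
      | bv j => exact hab.elim
    | bv i =>
      cases b with
      | prime v =>
        obtain ⟨h0, hv0⟩ := hab
        have hv : v ∉ X := fun h => hb ((hYprime v).mpr h)
        obtain ⟨hPv, hiv⟩ := hidx i ⟨m i - 1, Nat.sub_lt h0 Nat.one_pos⟩ v hv0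
        have hiv' : idx v = m i - 1 := hiv
        have hne : idx v ≠ k i := hk_ne i v hPv hv
        have hklt : k i < m i := hk_lt i
        have hm2 : 2 ≤ m i := hm i
        have hlt : ¬ idx v < k i := by omega
        simp only [hfdef, cutMap, if_neg hv, hPv, if_neg hlt]
      | orig v => exact hab.elim
      | tv v => exact hab.elim
      | sv v => exact hab.elim
      | sv' v => exact hab.elim
      | av j => exact hab.elim
      | bv j => exact hab.elim
  -- `f` is constant along walks avoiding `Y`
  have hwalk : ∀ {s t : GVert V r} (p : (gadgetGraph G P m ord).Walk s t),
      (∀ v ∈ p.support, v ∉ Y) → f s = f t := by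
    intro s t p
    induction p with
    | nil => intro _; rfl
    | @cons s b t h p ih =>
      intro hs
      have hsY : s ∉ Y := hs s (SimpleGraph.Walk.start_mem_support _)
      have hrest : ∀ v ∈ p.support, v ∉ Y := by
        intro v hv
        exact hs v (by simp [SimpleGraph.Walk.support_cons, hv])
      have hbY : b ∉ Y := hrest b (SimpleGraph.Walk.start_mem_support _)
      have hsb : f s = f b := by
        rw [gadgetGraph, SimpleGraph.fromRel_adj] at h
        rcases h.2 with h' | h'
        · exact key s b h' hsY hbY
        · exact (key b s h' hbY hsY).symm
      exact hsb.trans (ih hrest)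
  constructor
  · constructor
    · intro y hy
      subst hY
      simp only [Finset.mem_union, Finset.mem_image] at hy
      rcases hy with ⟨v, _, rfl⟩ | ⟨v, _, rfl⟩ <;> rfl
    · rintro s t hst p _
      by_contra hcon
      push_neg at hcon
      have hft := hwalk p hcon
      rcases hst with ⟨u, v, huv, heq⟩ | ⟨v, heq⟩ | ⟨i, heq⟩
      · obtain ⟨h1, h2⟩ := Prod.mk.injEq .. ▸ heq
        subst h1; subst h2
        simp only [hfdef, cutMap] at hft
        split_ifs at hft <;>
          first
            | exact huv (by injection hft)
            | exact GVert.noConfusion hft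
      · obtain ⟨h1, h2⟩ := Prod.mk.injEq .. ▸ heq
        subst h1; subst h2
        simp only [hfdef, cutMap] at hft
        split_ifs at hft <;> exact GVert.noConfusion hft
      · obtain ⟨h1, h2⟩ := Prod.mk.injEq .. ▸ heq
        subst h1; subst h2
        simp only [hfdef, cutMap] at hft
        cases hft
  · subst hY
    have hdisj : Disjoint ((univ \ X).image (GVert.orig : V → GVert V r))
        (X.image GVert.prime) := by
      simp only [Finset.disjoint_left, Finset.mem_image]
      rintro a ⟨v, _, rfl⟩ ⟨w, _, h⟩
      cases h
    rw [Finset.card_union_of_disjoint hdisj,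
      Finset.card_image_of_injective _ (fun a b h => by injection h),
      Finset.card_image_of_injective _ (fun a b h => by injection h),
      Finset.card_sdiff_of_subset (Finset.subset_univ X), Finset.card_univ]
    have := Finset.card_le_univ X
    omega
end

section
/- Let I' = (G', 𝒯) be the multicut instance constructed from a multicoloured graph (G, V₁, …, V_r) with |V_i| ≥ 2 for all i and |V| = n. Suppose Y is a multicut of I' with |Y| ≤ n. Then there exist vertices v₁ ∈ V₁, …, v_r ∈ V_r such that {v₁, …, v_r} is an independent set of G of size r; moreover |Y| = n and, for each i, (V_i ∖ {v_i}) ∪ {v_i'} ⊆ Y. -/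
open Finset

section Aux

open SimpleGraph

variable {V : Type*} {G : SimpleGraph V} {r : ℕ} {P : V → Fin r} {m : Fin r → ℕ}
    {ord : ∀ i, Fin (m i) ≃ {v : V // P v = i}}

lemma gadget_adj₁ {a b : GVert V r} (hne : a ≠ b) (h : gadgetRel G P m ord a b) :
    (gadgetGraph G P m ord).Adj a b :=
  (SimpleGraph.fromRel_adj _ _ _).mpr ⟨hne, Or.inl h⟩

lemma gadget_adj₂ {a b : GVert V r} (hne : a ≠ b) (h : gadgetRel G P m ord b a) :
    (gadgetGraph G P m ord).Adj a b :=
  (SimpleGraph.fromRel_adj _ _ _).mpr ⟨hne, Or.inr h⟩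

/-- The walk along the path `P i` of primed vertices, from position `j` to the last. -/
def chainWalk (G : SimpleGraph V) (P : V → Fin r) (m : Fin r → ℕ)
    (ord : ∀ i, Fin (m i) ≃ {v : V // P v = i}) (i : Fin r) (hi : 0 < m i) :
    ∀ (k j : ℕ) (hj : j < m i), j + k = m i - 1 →
      (gadgetGraph G P m ord).Walk (.prime (ord i ⟨j, hj⟩).1)
        (.prime (ord i ⟨m i - 1, Nat.sub_lt hi Nat.one_pos⟩).1)
  | 0, j, hj, hk => SimpleGraph.Walk.nil.copy
      (by have : j = m i - 1 := by omega
          subst this; rfl) rfl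
  | (k+1), j, hj, hk =>
      have hj1 : j + 1 < m i := by omega
      have hrel : gadgetRel G P m ord (.prime (ord i ⟨j, hj⟩).1)
          (.prime (ord i ⟨j+1, hj1⟩).1) := ⟨i, ⟨j, hj⟩, hj1, rfl, rfl⟩
      SimpleGraph.Walk.cons
        (gadget_adj₁
          (by intro h
              injection h with h
              have h2 := (ord i).injective (Subtype.ext h)
              have h3 : j = j + 1 := congrArg Fin.val h2
              omega)
          hrel)
        (chainWalk G P m ord i hi k (j+1) hj1 (by omega))

lemma chainWalk_support (G : SimpleGraph V) (P : V → Fin r) (m : Fin r → ℕ)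
    (ord : ∀ i, Fin (m i) ≃ {v : V // P v = i}) (i : Fin r) (hi : 0 < m i) :
    ∀ (k j : ℕ) (hj : j < m i) (hk : j + k = m i - 1)
      (x : GVert V r), x ∈ (chainWalk G P m ord i hi k j hj hk).support →
      ∃ w : V, P w = i ∧ x = .prime w
  | 0, j, hj, hk, x, hx => by
      simp only [chainWalk, SimpleGraph.Walk.support_copy,
        SimpleGraph.Walk.support_nil, List.mem_singleton] at hx
      exact ⟨_, (ord i ⟨m i - 1, Nat.sub_lt hi Nat.one_pos⟩).2, hx⟩
  | (k+1), j, hj, hk, x, hx => by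
      simp only [chainWalk, SimpleGraph.Walk.support_cons, List.mem_cons] at hx
      rcases hx with hx | hx
      · exact ⟨_, (ord i ⟨j, hj⟩).2, hx⟩
      · exact chainWalk_support G P m ord i hi k (j+1) _ _ x hx

end Aux

/-- If `Y` is a multicut of the instance `(G', 𝒯)` with `|Y| ≤ n = |V|`, then there are
vertices `v i ∈ V_i` forming an independent set of `G` of size `r`; moreover `|Y| = n`
and, for each `i`, `Y` contains `prime (v i)` and `orig u` for every `u ∈ V_i` with
`u ≠ v i`. -/
theorem independentSet_of_multicut {V : Type*} [Fintype V] [DecidableEq V]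
    (G : SimpleGraph V) {r : ℕ} (P : V → Fin r) (m : Fin r → ℕ)
    (ord : ∀ i, Fin (m i) ≃ {v : V // P v = i})
    (hclique : ∀ u v : V, u ≠ v → P u = P v → G.Adj u v)
    (hm : ∀ i, 2 ≤ m i)
    (Y : Finset (GVert V r))
    (hY : IsMulticut (gadgetGraph G P m ord) (demandPairs V r) Y)
    (hcard : Y.card ≤ Fintype.card V) :
    ∃ v : Fin r → V,
      (∀ i, P (v i) = i) ∧
      Function.Injective v ∧
      (∀ i j, i ≠ j → ¬ G.Adj (v i) (v j)) ∧
      Y.card = Fintype.card V ∧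
      (∀ i, GVert.prime (v i) ∈ Y) ∧
      (∀ i, ∀ u : V, P u = i → u ≠ v i → GVert.orig u ∈ Y) := by
  classical
  obtain ⟨hYnt, hYcut⟩ := hY
  -- Step 1: for each v, orig v or prime v is in Y
  have step1 : ∀ v : V, GVert.orig v ∈ Y ∨ GVert.prime v ∈ Y := by
    intro v
    have a1 : (gadgetGraph G P m ord).Adj (.sv v) (.orig v) := gadget_adj₁ (by simp) rfl
    have a2 : (gadgetGraph G P m ord).Adj (.orig v) (.prime v) := gadget_adj₁ (by simp) rfl
    have a3 : (gadgetGraph G P m ord).Adj (.prime v) (.sv' v) := gadget_adj₂ (by simp) rfl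
    set w : (gadgetGraph G P m ord).Walk (.sv v) (.sv' v) :=
      .cons a1 (.cons a2 (.cons a3 .nil)) with hw
    have hd : ((GVert.sv v, GVert.sv' v)) ∈ demandPairs V r := Or.inr (Or.inl ⟨v, rfl⟩)
    obtain ⟨y, hy1, hy2⟩ := hYcut hd w.toPath w.toPath.2
    have hy1' := SimpleGraph.Walk.support_toPath_subset w hy1
    have hnt := hYnt y hy2
    simp only [hw, SimpleGraph.Walk.support_cons, SimpleGraph.Walk.support_nil,
      List.mem_cons, List.mem_singleton, List.not_mem_nil, or_false] at hy1'
    rcases hy1' with rfl | rfl | rfl | rfl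
    · simp [nonTerminal] at hnt
    · exact Or.inl hy2
    · exact Or.inr hy2
    · simp [nonTerminal] at hnt
  -- Step 2: for adjacent u v, orig u or orig v in Y
  have step2 : ∀ u v : V, G.Adj u v → GVert.orig u ∈ Y ∨ GVert.orig v ∈ Y := by
    intro u v huv
    have a1 : (gadgetGraph G P m ord).Adj (.tv u) (.orig u) := gadget_adj₁ (by simp) rfl
    have a2 : (gadgetGraph G P m ord).Adj (.orig u) (.orig v) :=
      gadget_adj₁ (by simp [huv.ne]) huv
    have a3 : (gadgetGraph G P m ord).Adj (.orig v) (.tv v) := gadget_adj₂ (by simp) rfl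
    set w : (gadgetGraph G P m ord).Walk (.tv u) (.tv v) :=
      .cons a1 (.cons a2 (.cons a3 .nil)) with hw
    have hd : ((GVert.tv u, GVert.tv v)) ∈ demandPairs V r := Or.inl ⟨u, v, huv.ne, rfl⟩
    obtain ⟨y, hy1, hy2⟩ := hYcut hd w.toPath w.toPath.2
    have hy1' := SimpleGraph.Walk.support_toPath_subset w hy1
    have hnt := hYnt y hy2
    simp only [hw, SimpleGraph.Walk.support_cons, SimpleGraph.Walk.support_nil,
      List.mem_cons, List.mem_singleton, List.not_mem_nil, or_false] at hy1'
    rcases hy1' with rfl | rfl | rfl | rfl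
    · simp [nonTerminal] at hnt
    · exact Or.inl hy2
    · exact Or.inr hy2
    · simp [nonTerminal] at hnt
  -- Step 3: each class has a prime vertex in Y
  have step3 : ∀ i : Fin r, ∃ w : V, P w = i ∧ GVert.prime w ∈ Y := by
    intro i
    have hi : 0 < m i := lt_of_lt_of_le Nat.zero_lt_two (hm i)
    have adja : (gadgetGraph G P m ord).Adj (.av i) (.prime (ord i ⟨0, hi⟩).1) :=
      gadget_adj₁ (by simp) ⟨hi, rfl⟩
    have adjb : (gadgetGraph G P m ord).Adj
        (.prime (ord i ⟨m i - 1, Nat.sub_lt hi Nat.one_pos⟩).1) (.bv i) :=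
      gadget_adj₂ (by simp) ⟨hi, rfl⟩
    set c := chainWalk G P m ord i hi (m i - 1) 0 hi (by omega) with hc
    set w : (gadgetGraph G P m ord).Walk (.av i) (.bv i) := .cons adja (c.concat adjb) with hw
    have hd : ((GVert.av i, GVert.bv i)) ∈ demandPairs V r := Or.inr (Or.inr ⟨i, rfl⟩)
    obtain ⟨y, hy1, hy2⟩ := hYcut hd w.toPath w.toPath.2
    have hy1' := SimpleGraph.Walk.support_toPath_subset w hy1
    have hnt := hYnt y hy2
    simp only [hw, SimpleGraph.Walk.support_cons, SimpleGraph.Walk.support_concat,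
      List.concat_eq_append, List.mem_cons, List.mem_append, List.mem_singleton,
      List.not_mem_nil, or_false] at hy1'
    rcases hy1' with rfl | hy1' | rfl
    · simp [nonTerminal] at hnt
    · obtain ⟨w', hw', rfl⟩ := chainWalk_support G P m ord i hi _ _ _ _ y hy1'
      exact ⟨w', hw', hy2⟩
    · simp [nonTerminal] at hnt
  -- Counting
  set f : V → GVert V r := fun v => if GVert.orig v ∈ Y then .orig v else .prime v with hf
  have hfY : ∀ v, f v ∈ Y := by
    intro v; by_cases h : GVert.orig v ∈ Y
    · simp [hf, h]
    · have h2 := (step1 v).resolve_left h; simpa [hf, h] using h2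
  have hfinj : Function.Injective f := by
    intro a b hab
    by_cases ha : GVert.orig a ∈ Y <;> by_cases hb : GVert.orig b ∈ Y <;>
      simp [hf, ha, hb] at hab <;> exact hab
  have himage : Finset.univ.image f ⊆ Y := by
    intro y hy
    simp only [Finset.mem_image, Finset.mem_univ, true_and] at hy
    obtain ⟨v, rfl⟩ := hy; exact hfY v
  have hcardimg : (Finset.univ.image f).card = Fintype.card V := by
    rw [Finset.card_image_of_injective _ hfinj, Finset.card_univ]
  have hge : Fintype.card V ≤ Y.card := hcardimg ▸ Finset.card_le_card himage
  have hYcard : Y.card = Fintype.card V := le_antisymm hcard hge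
  have himeq : Finset.univ.image f = Y :=
    Finset.eq_of_subset_of_card_le himage (by rw [hcardimg, hYcard])
  have hnotboth : ∀ v : V, GVert.orig v ∈ Y → GVert.prime v ∉ Y := by
    intro v h1 h2
    have hmem : GVert.prime v ∈ Finset.univ.image f := himeq ▸ h2
    simp only [Finset.mem_image, Finset.mem_univ, true_and] at hmem
    obtain ⟨u, hu⟩ := hmem
    by_cases hu' : GVert.orig u ∈ Y <;> simp [hf, hu'] at hu
    exact hu' (hu ▸ h1)
  choose v hv1 hv2 using step3
  have hvnot : ∀ i, GVert.orig (v i) ∉ Y := fun i h => hnotboth _ h (hv2 i)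
  refine ⟨v, hv1, ?_, ?_, hYcard, hv2, ?_⟩
  · intro i j hij
    have : P (v i) = P (v j) := by rw [hij]
    rwa [hv1, hv1] at this
  · intro i j hij hadj
    rcases step2 (v i) (v j) hadj with h | h
    · exact hvnot i h
    · exact hvnot j h
  · intro i u hPu hune
    have hadj : G.Adj u (v i) := hclique u (v i) hune (by rw [hPu, hv1])
    rcases step2 u (v i) hadj with h | h
    · exact h
    · exact absurd h (hvnot i)
end
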